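/- Let G = (A ∪ H, E) be a finite bipartite graph with capacities b satisfying b(a) = 1 for all a ∈ A, let A = A_1 ∪ … ∪ A_p be a partition of A with target integers k_1,…,k_p, and suppose a partition matching of G exists. If M is a maximum b-matching of G that matches fewer than k_i vertices of A_i for some i, then there exists an improving sequence with respect to M (for the index i). -/

import Mathlib

open Finset

section MatchingCore

variable {A H : Type*} [DecidableEq A] [DecidableEq H]

/-- The degree of an agent `a` in an edge set `M`. -/
def adeg (M : Finset (A × H)) (a : A) : ℕ := (M.filter fun e => e.1 = a).card

/-- The degree of a house `h` in an edge set `M`. -/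
def hdeg (M : Finset (A × H)) (h : H) : ℕ := (M.filter fun e => e.2 = h).card

/-- `M` is a b-matching of the instance with edge set `E` and capacities `bA` on agents
and `bH` on houses. -/
def IsBM (E : Finset (A × H)) (bA : A → ℕ) (bH : H → ℕ) (M : Finset (A × H)) : Prop :=
  M ⊆ E ∧ (∀ a : A, adeg M a ≤ bA a) ∧ (∀ h : H, hdeg M h ≤ bH h)

/-- `M` is a maximum b-matching: a b-matching of the largest possible cardinality. -/
def IsMaxBM (E : Finset (A × H)) (bA : A → ℕ) (bH : H → ℕ) (M : Finset (A × H)) : Prop :=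
  IsBM E bA bH M ∧ ∀ M' : Finset (A × H), IsBM E bA bH M' → M'.card ≤ M.card

/-- Agent `a` is matched in `M`. -/
def Matched (M : Finset (A × H)) (a : A) : Prop := ∃ h : H, (a, h) ∈ M

/-- An `M`-alternating path from an agent to an agent, with vertex sequence
`a 0, h 0, a 1, h 1, …, h t, a (t+1)`, beginning with an edge not in `M` and ending with
an edge of `M`, with no edge repeated. -/
structure AltAA (E M : Finset (A × H)) (t : ℕ) where
  a : Fin (t + 2) → A
  h : Fin (t + 1) → H
  fwd_mem : ∀ i : Fin (t + 1), (a i.castSucc, h i) ∈ E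
  fwd_not : ∀ i : Fin (t + 1), (a i.castSucc, h i) ∉ M
  bwd_mem : ∀ i : Fin (t + 1), (a i.succ, h i) ∈ M
  fwd_inj : ∀ i j : Fin (t + 1), (a i.castSucc, h i) = (a j.castSucc, h j) → i = j
  bwd_inj : ∀ i j : Fin (t + 1), (a i.succ, h i) = (a j.succ, h j) → i = j

namespace AltAA

variable {E M : Finset (A × H)} {t : ℕ}

/-- The first agent of an alternating path. -/
def first (P : AltAA E M t) : A := P.a 0

/-- The last agent of an alternating path. -/
def last (P : AltAA E M t) : A := P.a (Fin.last (t + 1))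

/-- The edge set of an alternating path. -/
def edges (P : AltAA E M t) : Finset (A × H) :=
  (Finset.univ.image fun i : Fin (t + 1) => (P.a i.castSucc, P.h i)) ∪
    (Finset.univ.image fun i : Fin (t + 1) => (P.a i.succ, P.h i))

end AltAA

open Classical in
/-- The number of vertices of the part `A_i` (the fiber of `part` over `i`) that are
matched in `M`. -/
noncomputable def nMatched [Fintype A] {p : ℕ} (part : A → Fin p) (M : Finset (A × H)) (i : Fin p) :
    ℕ :=
  (Finset.univ.filter fun a : A => part a = i ∧ ∃ h : H, (a, h) ∈ M).card

/-- A partition matching: a maximum b-matching (all agents having capacity 1) that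
matches at least `kk i` vertices of the part `A_i` for every `i`. -/
def IsPartitionMatching [Fintype A] (E : Finset (A × H)) (bH : H → ℕ) {p : ℕ}
    (part : A → Fin p) (kk : Fin p → ℕ) (M : Finset (A × H)) : Prop :=
  IsMaxBM E (fun _ => 1) bH M ∧ ∀ i : Fin p, kk i ≤ nMatched part M i

/-- An improving sequence for the index `i` with respect to `M`: a sequence of pairwise
edge-disjoint `M`-alternating paths `P 0, …, P s`, each beginning with a non-`M`-edge and
ending with an `M`-edge, whose first agent is an unmatched vertex of `A_i`, whose last
agent lies in a part `A_{i'}` in which `M` matches strictly more than `kk i'` vertices,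
and such that consecutive paths link up inside a common part as prescribed. -/
structure ImpSeq [Fintype A] (E M : Finset (A × H)) {p : ℕ} (part : A → Fin p)
    (kk : Fin p → ℕ) (i : Fin p) where
  s : ℕ
  P : Fin (s + 1) → (t : ℕ) × AltAA E M t
  disj : ∀ j j' : Fin (s + 1), j ≠ j' → Disjoint (P j).2.edges (P j').2.edges
  startPart : part (P 0).2.first = i
  startUnmatched : ¬ Matched M (P 0).2.first
  endExceeds :
    kk (part (P (Fin.last s)).2.last) < nMatched part M (part (P (Fin.last s)).2.last)
  chain : ∀ j : Fin s,
    part ((P j.castSucc).2.last) = part ((P j.succ).2.first) ∧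
      ((P j.castSucc).2.last = (P j.succ).2.first ∨ ¬ Matched M ((P j.succ).2.first))

end MatchingCore

namespace ImpAux
set_option linter.unusedSectionVars false

open Finset

variable {A H : Type*} [DecidableEq A] [DecidableEq H]

lemma matched_of_mem {M : Finset (A × H)} {a : A} {h : H} (hm : (a, h) ∈ M) : Matched M a :=
  ⟨h, hm⟩

lemma unique_house {M : Finset (A × H)} {a : A} (h1 : adeg M a ≤ 1) {h h' : H}
    (hm : (a, h) ∈ M) (hm' : (a, h') ∈ M) : h = h' := by
  have := Finset.card_le_one.mp h1 (a, h) (by simp [Finset.mem_filter, hm])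
    (a, h') (by simp [Finset.mem_filter, hm'])
  exact congrArg Prod.snd this

lemma not_mem_of_not_matched {M : Finset (A × H)} {a : A} (h : ¬ Matched M a) (h' : H) :
    (a, h') ∉ M := fun hm => h ⟨h', hm⟩

lemma adeg_insert {M : Finset (A × H)} {e : A × H} (he : e ∉ M) (x : A) :
    adeg (insert e M) x = adeg M x + if e.1 = x then 1 else 0 := by
  unfold adeg
  rw [Finset.filter_insert]
  split
  · rw [Finset.card_insert_of_notMem (by simp [Finset.mem_filter, he])]
  · simp_all

lemma adeg_erase {M : Finset (A × H)} {e : A × H} (he : e ∈ M) (x : A) :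
    adeg (M.erase e) x = adeg M x - if e.1 = x then 1 else 0 := by
  unfold adeg
  rw [Finset.filter_erase]
  split
  · rw [Finset.card_erase_of_mem (by simp [Finset.mem_filter, he, *])]
  · rw [Finset.erase_eq_of_notMem (by simp [Finset.mem_filter]; tauto)]
    simp

lemma hdeg_insert {M : Finset (A × H)} {e : A × H} (he : e ∉ M) (x : H) :
    hdeg (insert e M) x = hdeg M x + if e.2 = x then 1 else 0 := by
  unfold hdeg
  rw [Finset.filter_insert]
  split
  · rw [Finset.card_insert_of_notMem (by simp [Finset.mem_filter, he])]
  · simp_all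

lemma hdeg_erase {M : Finset (A × H)} {e : A × H} (he : e ∈ M) (x : H) :
    hdeg (M.erase e) x = hdeg M x - if e.2 = x then 1 else 0 := by
  unfold hdeg
  rw [Finset.filter_erase]
  split
  · rw [Finset.card_erase_of_mem (by simp [Finset.mem_filter, he, *])]
  · rw [Finset.erase_eq_of_notMem (by simp [Finset.mem_filter]; tauto)]
    simp

lemma adeg_pos_of_mem {M : Finset (A × H)} {a : A} {h : H} (hm : (a, h) ∈ M) :
    1 ≤ adeg M a := by
  have : (a, h) ∈ M.filter fun e => e.1 = a := by simp [Finset.mem_filter, hm]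
  exact Finset.card_pos.mpr ⟨_, this⟩ 

lemma hdeg_pos_of_mem {M : Finset (A × H)} {a : A} {h : H} (hm : (a, h) ∈ M) :
    1 ≤ hdeg M h := by
  have : (a, h) ∈ M.filter fun e => e.2 = h := by simp [Finset.mem_filter, hm]
  exact Finset.card_pos.mpr ⟨_, this⟩ 

lemma adeg_eq_zero {M : Finset (A × H)} {a : A} (h : ¬ Matched M a) : adeg M a = 0 := by
  unfold adeg
  rw [Finset.card_eq_zero, Finset.filter_eq_empty_iff]
  rintro ⟨a', h'⟩ hm rfl
  exact h ⟨h', hm⟩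

lemma matched_of_adeg_pos {M : Finset (A × H)} {a : A} (h : 0 < adeg M a) : Matched M a := by
  obtain ⟨⟨a', h'⟩, he⟩ := Finset.card_pos.mp h
  rw [Finset.mem_filter] at he
  obtain ⟨hm, rfl⟩ := he
  exact ⟨h', hm⟩


variable {p : ℕ}

/-- A step of a chain: an agent, a house, and another agent. -/
def SOK (E M : Finset (A × H)) (x : A × H × A) : Prop :=
  (x.1, x.2.1) ∈ E ∧ (x.1, x.2.1) ∉ M ∧ (x.2.2, x.2.1) ∈ M

def Lnk (M : Finset (A × H)) (part : A → Fin p) (x y : A × H × A) : Prop :=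
  part x.2.2 = part y.1 ∧ (x.2.2 = y.1 ∨ ¬Matched M y.1)

def ChainL (E M : Finset (A × H)) (part : A → Fin p) (i : Fin p) (c : List (A × H × A)) :
    Prop :=
  (∀ z ∈ c, SOK E M z) ∧ c.Chain' (Lnk M part) ∧ ∀ z ∈ c.head?, ¬Matched M z.1 ∧ part z.1 = i

def Rch (E M : Finset (A × H)) (part : A → Fin p) (i : Fin p) (a : A) : Prop :=
  ∃ c z, ChainL E M part i c ∧ c.getLast? = some z ∧ z.2.2 = a

def Dd : (A × H × A) → (A × H × A) → Prop := fun x y =>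
  x.2.2 ≠ y.2.2 ∧ (x.1, x.2.1) ≠ (y.1, y.2.1)

lemma head?_append_left {α : Type*} {l : List α} (h : l ≠ []) (t : List α) :
    (l ++ t).head? = l.head? := by
  cases l with
  | nil => exact absurd rfl h
  | cons a l => simp

lemma oneStep {E : Finset (A × H)} {bH : H → ℕ} {M₁ : Finset (A × H)}
    (hBM : IsBM E (fun _ => 1) bH M₁) {x : A × H × A}
    (hE : (x.1, x.2.1) ∈ E) (h1 : ¬ Matched M₁ x.1) (h2 : (x.2.2, x.2.1) ∈ M₁) :
    ∃ M₂, IsBM E (fun _ => 1) bH M₂ ∧ M₂.card = M₁.card ∧ (∀ h, hdeg M₂ h = hdeg M₁ h) ∧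
      ¬ Matched M₂ x.2.2 ∧ ∀ a : A, a ≠ x.1 → a ≠ x.2.2 →
        M₂.filter (fun e => e.1 = a) = M₁.filter (fun e => e.1 = a) := by
  have hne : x.1 ≠ x.2.2 := by
    intro h
    exact h1 ⟨x.2.1, by rw [h]; exact h2⟩
  have hfwd_not : (x.1, x.2.1) ∉ M₁ := not_mem_of_not_matched h1 _
  have he₁ : (x.1, x.2.1) ∉ M₁.erase (x.2.2, x.2.1) := fun h =>
    hfwd_not (Finset.mem_of_mem_erase h)
  have hdegeq : ∀ h, hdeg (insert (x.1, x.2.1) (M₁.erase (x.2.2, x.2.1))) h = hdeg M₁ h := by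
    intro h
    rw [hdeg_insert he₁, hdeg_erase h2]
    simp only
    by_cases hh : x.2.1 = h
    · have hpos := hdeg_pos_of_mem h2
      rw [hh] at hpos
      simp [hh]
      omega
    · simp [hh]
  refine ⟨insert (x.1, x.2.1) (M₁.erase (x.2.2, x.2.1)), ⟨?_, ?_, ?_⟩, ?_, hdegeq, ?_, ?_⟩
  · exact Finset.insert_subset hE ((Finset.erase_subset _ _).trans hBM.1)
  · intro a
    rw [adeg_insert he₁, adeg_erase h2]
    simp only
    by_cases ha : x.1 = a
    · subst ha
      rw [adeg_eq_zero h1]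
      simp
    · have := hBM.2.1 a
      simp only at this
      simp only [if_neg ha]
      omega
  · intro h
    rw [hdegeq h]
    exact hBM.2.2 h
  · rw [Finset.card_insert_of_notMem he₁, Finset.card_erase_of_mem h2]
    have : 1 ≤ M₁.card := Finset.card_pos.mpr ⟨_, h2⟩
    omega
  · rintro ⟨h', hm⟩
    rcases Finset.mem_insert.mp hm with heq | hmem
    · exact hne (congrArg Prod.fst heq).symm
    · have hM : (x.2.2, h') ∈ M₁ := Finset.mem_of_mem_erase hmem
      have : h' = x.2.1 := unique_house (hBM.2.1 x.2.2) hM h2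
      exact (Finset.ne_of_mem_erase hmem) (by rw [this])
  · intro a ha1 ha2
    rw [Finset.filter_insert]
    rw [if_neg (by simpa using fun h => ha1 h.symm)]
    rw [Finset.filter_erase]
    rw [Finset.erase_eq_of_notMem (by simp [Finset.mem_filter]; intro _; exact fun h => ha2 h.symm)]

lemma exchange {E : Finset (A × H)} {bH : H → ℕ} {M : Finset (A × H)}
    (hBM : IsBM E (fun _ => 1) bH M) {part : A → Fin p} {i : Fin p} :
    ∀ n (c : List (A × H × A)), c.length = n → ChainL E M part i c → c.Pairwise Dd →
    ∀ x, c.getLast? = some x →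
    ∃ M₂, IsBM E (fun _ => 1) bH M₂ ∧ M₂.card = M.card ∧ (∀ h, hdeg M₂ h = hdeg M h) ∧
      ¬ Matched M₂ x.2.2 ∧ ∀ a : A, Matched M a → a ∉ c.map (fun z => z.2.2) →
        M₂.filter (fun e => e.1 = a) = M.filter (fun e => e.1 = a) := by
  intro n
  induction n using Nat.strong_induction_on with
  | _ n IH =>
    intro c hlen hc hpw x hlast
    have hcne : c ≠ [] := by rintro rfl; simp at hlast
    obtain ⟨l, b, rfl⟩ : ∃ l b, c = l ++ [b] := by
      rcases List.eq_nil_or_concat c with h | ⟨L, b, h⟩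
      · exact absurd h hcne
      · exact ⟨L, b, by simpa [List.concat_eq_append] using h⟩
    rw [List.getLast?_concat] at hlast
    replace hlast : x = b := by injection hlast with h; exact h.symm
    subst hlast
    have hxmem : x ∈ l ++ [x] := by simp
    have hsok : SOK E M x := hc.1 x hxmem
    by_cases hm1 : Matched M x.1
    · -- continue case
      have hlne : l ≠ [] := by
        rintro rfl
        have := hc.2.2 x (by simp)
        exact this.1 hm1
      obtain ⟨y, hy⟩ : ∃ y, l.getLast? = some y :=
        ⟨l.getLast hlne, List.getLast?_eq_getLast hlne⟩
      have hchain := hc.2.1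
      replace hchain := List.isChain_append.mp hchain
      have hlink : Lnk M part y x := hchain.2.2 y hy x rfl
      have hyx : y.2.2 = x.1 := by
        rcases hlink.2 with h | h
        · exact h
        · exact absurd hm1 h
      have hcl : ChainL E M part i l :=
        ⟨fun z hz => hc.1 z (by simp [hz]), hchain.1, fun z hz =>
          hc.2.2 z (by rw [head?_append_left hlne]; exact hz)⟩
      have hpwl : l.Pairwise Dd := (List.pairwise_append.mp hpw).1
      have hlenlt : l.length < n := by simp at hlen; omega
      obtain ⟨M₁, hBM₁, hcard₁, hdeg₁, hunm₁, hfil₁⟩ :=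
        IH l.length hlenlt l rfl hcl hpwl y hy
      have hx22 : x.2.2 ∉ l.map (fun z => z.2.2) := by
        intro hmem
        obtain ⟨z, hz, hz2⟩ := List.mem_map.mp hmem
        exact ((List.pairwise_append.mp hpw).2.2 z hz x (by simp)).1 hz2
      have hx22M : Matched M x.2.2 := ⟨x.2.1, hsok.2.2⟩
      have hmem₁ : (x.2.2, x.2.1) ∈ M₁ := by
        have := hfil₁ x.2.2 hx22M hx22
        have h2 : (x.2.2, x.2.1) ∈ M.filter (fun e => e.1 = x.2.2) := by
          simp [Finset.mem_filter, hsok.2.2]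
        rw [← this] at h2
        exact (Finset.mem_filter.mp h2).1
      have hunm₁' : ¬ Matched M₁ x.1 := by rw [← hyx]; exact hunm₁
      obtain ⟨M₂, hBM₂, hcard₂, hdeg₂, hunm₂, hfil₂⟩ :=
        oneStep hBM₁ hsok.1 hunm₁' hmem₁
      refine ⟨M₂, hBM₂, by rw [hcard₂, hcard₁], fun h => by rw [hdeg₂ h, hdeg₁ h], hunm₂, ?_⟩
      intro a haM hamap
      have ha2 : a ≠ x.2.2 := by
        intro h; apply hamap; simp [h]
      have hal : a ∉ l.map (fun z => z.2.2) := fun h => hamap (by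
        rw [List.map_append]; exact List.mem_append_left _ h)
      have ha1 : a ≠ x.1 := by
        rw [← hyx]
        intro h
        apply hal
        subst h
        exact List.mem_map.mpr ⟨y, List.mem_of_mem_getLast? hy, rfl⟩
      rw [hfil₂ a ha1 ha2, hfil₁ a haM hal]
    · -- restart case
      obtain ⟨M₂, hBM₂, hcard₂, hdeg₂, hunm₂, hfil₂⟩ :=
        oneStep hBM hsok.1 hm1 hsok.2.2
      refine ⟨M₂, hBM₂, hcard₂, hdeg₂, hunm₂, ?_⟩
      intro a haM hamap
      have ha2 : a ≠ x.2.2 := by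
        intro h; apply hamap; simp [h]
      have ha1 : a ≠ x.1 := fun h => hm1 (h ▸ haM)
      exact hfil₂ a ha1 ha2


lemma not_pairwise_split {α : Type*} {R : α → α → Prop} :
    ∀ (c : List α), ¬ c.Pairwise R →
      ∃ c₁ a c₂ b c₃, c = c₁ ++ a :: (c₂ ++ b :: c₃) ∧ ¬ R a b := by
  intro c
  induction c with
  | nil => intro h; exact absurd List.Pairwise.nil h
  | cons x t ih =>
    intro h
    rw [List.pairwise_cons] at h
    by_cases hall : ∀ a' ∈ t, R x a'
    · have hpt : ¬ t.Pairwise R := fun hp => h ⟨hall, hp⟩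
      obtain ⟨c₁, a, c₂, b, c₃, rfl, hr⟩ := ih hpt
      exact ⟨x :: c₁, a, c₂, b, c₃, rfl, hr⟩
    · push_neg at hall
      obtain ⟨b, hb, hrb⟩ := hall
      obtain ⟨c₂, c₃, rfl⟩ := List.append_of_mem hb
      exact ⟨[], x, c₂, b, c₃, rfl, hrb⟩

lemma dedup {E M : Finset (A × H)} {part : A → Fin p} {i : Fin p} :
    ∀ n (c : List (A × H × A)), c.length = n → ChainL E M part i c →
    ∀ x, c.getLast? = some x →
    ∃ c' x', ChainL E M part i c' ∧ c'.Pairwise Dd ∧ c'.getLast? = some x' ∧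
      x'.2.2 = x.2.2 := by
  intro n
  induction n using Nat.strong_induction_on with
  | _ n IH =>
    intro c hlen hc x hlast
    by_cases hpw : c.Pairwise Dd
    · exact ⟨c, x, hc, hpw, hlast, rfl⟩
    obtain ⟨c₁, a, c₂, b, c₃, rfl, hab⟩ := not_pairwise_split c hpw
    have h0 := List.isChain_append.mp hc.2.1
    have h1 := List.isChain_cons.mp h0.2.1
    have h2 := List.isChain_append.mp h1.2
    have h3 := List.isChain_cons.mp h2.2.1
    have hcase : a.2.2 = b.2.2 ∨ (a.1, a.2.1) = (b.1, b.2.1) := by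
      by_cases h1' : a.2.2 = b.2.2
      · exact Or.inl h1'
      · by_contra h2'
        push_neg at h2'
        exact hab ⟨h1', h2'.2⟩
    have hlast2 : (b :: c₃).getLast? = some x := by
      rw [show c₁ ++ a :: (c₂ ++ b :: c₃) = (c₁ ++ a :: c₂) ++ b :: c₃ by simp] at hlast
      rwa [List.getLast?_append_cons] at hlast
    have key : ∀ w : A × H × A, w.2.2 = b.2.2 → w.1 = a.1 → SOK E M w →
        (∀ y ∈ c₃.head?, Lnk M part w y) →
        ∃ c' x', ChainL E M part i c' ∧ c'.Pairwise Dd ∧ c'.getLast? = some x' ∧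
          x'.2.2 = x.2.2 := by
      intro w hw2 hw1 hwsok hwlnk
      have hlen' : (c₁ ++ w :: c₃).length < n := by
        simp only [List.length_append, List.length_cons] at hlen ⊢
        omega
      have hchain' : (c₁ ++ w :: c₃).Chain' (Lnk M part) := by
        refine List.isChain_append.mpr ?_
        refine ⟨h0.1, List.isChain_cons.mpr ⟨hwlnk, h3.2⟩, ?_⟩
        intro z hz y hy
        simp only [List.head?_cons, Option.mem_some_iff] at hy
        subst hy
        have hza := h0.2.2 z hz a (by simp)
        simp only [Lnk] at hza ⊢
        rw [hw1]
        exact hza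
      have hmem' : ∀ z ∈ c₁ ++ w :: c₃, SOK E M z := by
        intro z hz
        simp only [List.mem_append, List.mem_cons] at hz
        rcases hz with hz | hz | hz
        · exact hc.1 z (by simp [hz])
        · exact hz ▸ hwsok
        · exact hc.1 z (by simp [hz])
      have hhead' : ∀ z ∈ (c₁ ++ w :: c₃).head?, ¬Matched M z.1 ∧ part z.1 = i := by
        intro z hz
        rw [List.head?_append] at hz
        cases hc₁ : c₁.head? with
        | some u =>
          rw [hc₁] at hz
          have hz' : z = u := by
            rw [show (some u).or (w :: c₃).head? = some u from rfl] at hz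
            exact (by simpa using hz : u = z).symm
          apply hc.2.2
          rw [List.head?_append, hc₁,
            show (some u).or (a :: (c₂ ++ b :: c₃)).head? = some u from rfl]
          simp [hz']
        | none =>
          rw [hc₁] at hz
          simp only [Option.none_or, List.head?_cons, Option.mem_some_iff] at hz
          subst hz
          have := hc.2.2 a (by rw [List.head?_append, hc₁]; simp)
          rw [← hw1] at this
          exact this
      have hc'' : ChainL E M part i (c₁ ++ w :: c₃) := ⟨hmem', hchain', hhead'⟩
      obtain ⟨x', hx'1, hx'2⟩ : ∃ x', (c₁ ++ w :: c₃).getLast? = some x' ∧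
          x'.2.2 = x.2.2 := by
        rcases List.eq_nil_or_concat c₃ with rfl | ⟨t3, z3, rfl⟩
        · have hxb : b = x := by simpa using hlast2
          refine ⟨w, ?_, by rw [hw2, hxb]⟩
          rw [List.getLast?_append_cons]
          simp
        · have hxz : z3 = x := by
            rw [List.concat_eq_append,
              show b :: (t3 ++ [z3]) = (b :: t3) ++ [z3] from rfl,
              List.getLast?_concat] at hlast2
            simpa using hlast2
          refine ⟨z3, ?_, by rw [hxz]⟩
          rw [List.getLast?_append_cons, List.concat_eq_append,
            show w :: (t3 ++ [z3]) = (w :: t3) ++ [z3] from rfl,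
            List.getLast?_concat]
      obtain ⟨c'', x'', hc''', hpw'', hlast'', hval⟩ :=
        IH _ hlen' _ rfl hc'' x' hx'1
      exact ⟨c'', x'', hc''', hpw'', hlast'', by rw [hval, hx'2]⟩
    rcases hcase with h22 | hfwd
    · -- keep a, drop c₂ ++ [b]
      refine key a h22 rfl (hc.1 a (by simp)) ?_
      intro y hy
      have hby := h3.1 y hy
      simp only [Lnk] at hby ⊢
      rw [h22]
      exact hby
    · -- keep b, drop a :: c₂
      exact key b rfl (congrArg Prod.fst hfwd).symm (hc.1 b (by simp)) h3.1


def GoodA (E M : Finset (A × H)) (part : A → Fin p) (i : Fin p) (a : A) : Prop :=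
  Rch E M part i a ∨
    (¬Matched M a ∧ (part a = i ∨ ∃ b, Rch E M part i b ∧ part b = part a))

def WH (E M : Finset (A × H)) (part : A → Fin p) (i : Fin p) (h : H) : Prop :=
  ∃ a, GoodA E M part i a ∧ (a, h) ∈ E ∧ (a, h) ∉ M

lemma rch_start {E M : Finset (A × H)} {part : A → Fin p} {i : Fin p} {a₀ a'' : A} {h : H}
    (h0 : ¬Matched M a₀) (hp : part a₀ = i) (hs : SOK E M (a₀, h, a'')) :
    Rch E M part i a'' := by
  refine ⟨[(a₀, h, a'')], (a₀, h, a''), ⟨?_, ?_, ?_⟩, by simp, rfl⟩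
  · intro z hz
    simp only [List.mem_singleton] at hz
    exact hz ▸ hs
  · exact List.isChain_singleton _
  · intro z hz
    simp only [List.head?_cons, Option.mem_some_iff] at hz
    subst hz
    exact ⟨h0, hp⟩

lemma rch_extend {E M : Finset (A × H)} {part : A → Fin p} {i : Fin p} {b a' a'' : A} {h : H}
    (hb : Rch E M part i b) (hp : part a' = part b) (hj : a' = b ∨ ¬Matched M a')
    (hs : SOK E M (a', h, a'')) : Rch E M part i a'' := by
  obtain ⟨c, z, hc, hlast, hz⟩ := hb
  have hcne : c ≠ [] := by rintro rfl; simp at hlast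
  refine ⟨c ++ [(a', h, a'')], (a', h, a''), ⟨?_, ?_, ?_⟩, List.getLast?_concat (l := c), rfl⟩
  · intro w hw
    rcases List.mem_append.mp hw with hw | hw
    · exact hc.1 w hw
    · simp only [List.mem_singleton] at hw
      exact hw ▸ hs
  · refine List.isChain_append.mpr ?_
    refine ⟨hc.2.1, List.isChain_singleton _, ?_⟩
    intro u hu y hy
    rw [hlast] at hu
    simp only [Option.mem_some_iff] at hu
    subst hu
    simp only [List.head?_cons, Option.mem_some_iff] at hy
    subst hy
    refine ⟨by rw [hz, ← hp], ?_⟩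
    rcases hj with rfl | hj
    · exact Or.inl hz
    · exact Or.inr hj
  · intro z' hz'
    rw [head?_append_left hcne] at hz'
    exact hc.2.2 z' hz'

lemma rch_matched {E M : Finset (A × H)} {part : A → Fin p} {i : Fin p} {a : A}
    (hr : Rch E M part i a) : Matched M a := by
  obtain ⟨c, z, hc, hlast, hz⟩ := hr
  have := hc.1 z (List.mem_of_mem_getLast? hlast)
  exact ⟨z.2.1, hz ▸ this.2.2⟩

lemma rch_house {E M : Finset (A × H)} {part : A → Fin p} {i : Fin p} {a : A}
    (hr : Rch E M part i a) : ∃ h, (a, h) ∈ M ∧ WH E M part i h := by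
  obtain ⟨c, z, hc, hlast, hz⟩ := hr
  have hcne : c ≠ [] := by rintro rfl; simp at hlast
  obtain ⟨l, b, rfl⟩ : ∃ l b, c = l ++ [b] := by
    rcases List.eq_nil_or_concat c with h | ⟨L, b, h⟩
    · exact absurd h hcne
    · exact ⟨L, b, by simpa [List.concat_eq_append] using h⟩
  rw [List.getLast?_concat] at hlast
  replace hlast : z = b := by injection hlast with h; exact h.symm
  subst hlast
  have hsok : SOK E M z := hc.1 z (by simp)
  have hgood : GoodA E M part i z.1 := by
    rcases List.eq_nil_or_concat l with rfl | ⟨t, y', rfl⟩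
    · have hh := hc.2.2 z (by simp)
      exact Or.inr ⟨hh.1, Or.inl hh.2⟩
    · simp only [List.concat_eq_append] at hc
      have hlne : t ++ [y'] ≠ [] := by simp
      have hchain := List.isChain_append.mp hc.2.1
      have hlink : Lnk M part y' z :=
        hchain.2.2 y' (by simp [List.getLast?_concat]) z rfl
      have hry : Rch E M part i y'.2.2 := by
        refine ⟨t ++ [y'], y', ⟨?_, hchain.1, ?_⟩, List.getLast?_concat (l := t), rfl⟩
        · intro w hw
          exact hc.1 w (List.mem_append_left _ hw)
        · intro w hw
          exact hc.2.2 w (by rw [head?_append_left hlne]; exact hw)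
      rcases hlink.2 with heq | hunm
      · exact Or.inl (heq ▸ hry)
      · exact Or.inr ⟨hunm, Or.inr ⟨y'.2.2, hry, hlink.1⟩⟩
  exact ⟨z.2.1, hz ▸ hsok.2.2, z.1, hgood, hsok.1, hsok.2.1⟩

lemma wh_rch {E M : Finset (A × H)} {part : A → Fin p} {i : Fin p} {a'' : A} {h : H}
    (hm : (a'', h) ∈ M) (hw : WH E M part i h) : Rch E M part i a'' := by
  obtain ⟨a, hgood, hE, hnM⟩ := hw
  have hsok : SOK E M (a, h, a'') := ⟨hE, hnM, hm⟩
  rcases hgood with hr | ⟨hunm, hpi | ⟨b, hrb, hpb⟩⟩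
  · exact rch_extend hr rfl (Or.inl rfl) hsok
  · exact rch_start hunm hpi hsok
  · exact rch_extend hrb hpb.symm (Or.inr hunm) hsok

lemma aug_unmatched {E M : Finset (A × H)} {bH : H → ℕ}
    (hmax : IsMaxBM E (fun _ => 1) bH M) {a : A} {h' : H}
    (hunm : ¬Matched M a) (hE : (a, h') ∈ E) (hlt : hdeg M h' < bH h') : False := by
  have hnm : (a, h') ∉ M := not_mem_of_not_matched hunm _
  have hbm : IsBM E (fun _ => 1) bH (insert (a, h') M) := by
    refine ⟨Finset.insert_subset hE hmax.1.1, ?_, ?_⟩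
    · intro x
      rw [adeg_insert hnm]
      by_cases hx : a = x
      · subst hx
        rw [adeg_eq_zero hunm]
        simp
      · have := hmax.1.2.1 x
        simp only at this ⊢
        rw [if_neg hx]
        omega
    · intro h
      rw [hdeg_insert hnm]
      by_cases hh : h' = h
      · subst hh
        have := hmax.1.2.2 h'
        rw [if_pos (rfl : ((a, h') : A × H).2 = h')]
        omega
      · simp only [if_neg hh]
        have := hmax.1.2.2 h
        omega
  have := hmax.2 _ hbm
  rw [Finset.card_insert_of_notMem hnm] at this
  omega

lemma aug_good {E M : Finset (A × H)} {bH : H → ℕ} {part : A → Fin p} {i : Fin p}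
    (hmax : IsMaxBM E (fun _ => 1) bH M) {a : A} {h' : H}
    (hgood : GoodA E M part i a) (hE : (a, h') ∈ E) (hnM : (a, h') ∉ M)
    (hlt : hdeg M h' < bH h') : False := by
  rcases hgood with hr | ⟨hunm, _⟩
  · obtain ⟨c, z, hc, hlast, hz⟩ := hr
    obtain ⟨c', x', hc', hpw', hlast', hval⟩ := dedup c.length c rfl hc z hlast
    obtain ⟨M₂, hBM₂, hcard₂, hdeg₂, hunm₂, _⟩ :=
      exchange hmax.1 c'.length c' rfl hc' hpw' x' hlast'
    rw [hval, hz] at hunm₂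
    have hnm₂ : (a, h') ∉ M₂ := not_mem_of_not_matched hunm₂ _
    have hbm : IsBM E (fun _ => 1) bH (insert (a, h') M₂) := by
      refine ⟨Finset.insert_subset hE hBM₂.1, ?_, ?_⟩
      · intro x
        rw [adeg_insert hnm₂]
        by_cases hx : a = x
        · subst hx
          rw [adeg_eq_zero hunm₂]
          simp
        · have := hBM₂.2.1 x
          simp only at this ⊢
          rw [if_neg hx]
          omega
      · intro h
        rw [hdeg_insert hnm₂]
        by_cases hh : h' = h
        · subst hh
          rw [hdeg₂ h', if_pos (rfl : ((a, h') : A × H).2 = h')]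
          omega
        · simp only [if_neg hh]
          have := hBM₂.2.2 h
          omega
    have := hmax.2 _ hbm
    rw [Finset.card_insert_of_notMem hnm₂, hcard₂] at this
    omega
  · exact aug_unmatched hmax hunm hE hlt

lemma wh_saturated {E M : Finset (A × H)} {bH : H → ℕ} {part : A → Fin p} {i : Fin p}
    (hmax : IsMaxBM E (fun _ => 1) bH M) {h : H} (hw : WH E M part i h) :
    hdeg M h = bH h := by
  refine le_antisymm (hmax.1.2.2 h) ?_
  by_contra hlt
  push_neg at hlt
  obtain ⟨a, hgood, hE, hnM⟩ := hw
  exact aug_good hmax hgood hE hnM hlt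


variable [Fintype A] [Fintype H]

def mkP {E M : Finset (A × H)} (x : A × H × A) (hx : SOK E M x) : AltAA E M 0 where
  a := ![x.1, x.2.2]
  h := ![x.2.1]
  fwd_mem := fun j => by fin_cases j; simpa using hx.1
  fwd_not := fun j => by fin_cases j; simpa using hx.2.1
  bwd_mem := fun j => by fin_cases j; simpa using hx.2.2
  fwd_inj := fun i j _ => by omega
  bwd_inj := fun i j _ => by omega

lemma mkP_first {E M : Finset (A × H)} (x : A × H × A) (hx : SOK E M x) :
    (mkP x hx).first = x.1 := rfl

lemma mkP_last {E M : Finset (A × H)} (x : A × H × A) (hx : SOK E M x) :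
    (mkP x hx).last = x.2.2 := rfl

lemma mkP_edges {E M : Finset (A × H)} (x : A × H × A) (hx : SOK E M x) (e : A × H) :
    e ∈ (mkP x hx).edges ↔ e = (x.1, x.2.1) ∨ e = (x.2.2, x.2.1) := by
  unfold AltAA.edges
  simp [mkP, Fin.exists_fin_one, eq_comm]


lemma build_impseq {E M : Finset (A × H)} {part : A → Fin p} {kk : Fin p → ℕ} {i : Fin p}
    (hM1 : ∀ a : A, adeg M a ≤ 1)
    (c : List (A × H × A)) (hc : ChainL E M part i c) (hpw : c.Pairwise Dd)
    (x : A × H × A) (hlast : c.getLast? = some x)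
    (hsur : kk (part x.2.2) < nMatched part M (part x.2.2)) :
    Nonempty (ImpSeq E M part kk i) := by
  have hcne : c ≠ [] := by rintro rfl; simp at hlast
  have hnpos : 0 < c.length := List.length_pos_iff.mpr hcne
  set s : ℕ := c.length - 1 with hs
  have hsn : s + 1 = c.length := by omega
  have hidx : ∀ j : Fin (s + 1), (j : ℕ) < c.length := fun j => by
    have := j.isLt; omega
  have hDD : ∀ (u v : Fin c.length), u ≠ v →
      (c.get u).2.2 ≠ (c.get v).2.2 ∧
      ((c.get u).1, (c.get u).2.1) ≠ ((c.get v).1, (c.get v).2.1) := by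
    intro u v huv
    rcases lt_or_gt_of_ne huv with h | h
    · exact List.pairwise_iff_get.mp hpw u v h
    · have := List.pairwise_iff_get.mp hpw v u h
      exact ⟨this.1.symm, this.2.symm⟩
  refine ⟨⟨s, fun j => ⟨0, mkP (c.get ⟨j, hidx j⟩) (hc.1 _ (List.get_mem c _))⟩,
    ?_, ?_, ?_, ?_, ?_⟩⟩
  · -- disj
    intro j j' hne
    rw [Finset.disjoint_left]
    intro e he he'
    rw [mkP_edges] at he he'
    have huv : (⟨j, hidx j⟩ : Fin c.length) ≠ ⟨j', hidx j'⟩ := by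
      intro h
      rw [Fin.mk.injEq] at h
      exact hne (Fin.ext h)
    have hD := hDD _ _ huv
    set u := c.get ⟨j, hidx j⟩
    set v := c.get ⟨j', hidx j'⟩
    have hu : SOK E M u := hc.1 _ (List.get_mem c _)
    have hv : SOK E M v := hc.1 _ (List.get_mem c _)
    rcases he with rfl | rfl <;> rcases he' with h' | h'
    · exact hD.2 (by rw [← h'])
    · exact hu.2.1 (by rw [h']; exact hv.2.2)
    · exact hv.2.1 (by rw [← h']; exact hu.2.2)
    · exact hD.1 (congrArg Prod.fst h')
  · -- startPart
    have h0 : c.head? = some (c.get ⟨0, hnpos⟩) := by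
      cases c with
      | nil => exact absurd rfl hcne
      | cons z t => rfl
    exact (hc.2.2 _ (by rw [h0]; rfl)).2
  · -- startUnmatched
    have h0 : c.head? = some (c.get ⟨0, hnpos⟩) := by
      cases c with
      | nil => exact absurd rfl hcne
      | cons z t => rfl
    exact (hc.2.2 _ (by rw [h0]; rfl)).1
  · -- endExceeds
    have hxl : x = c.get ⟨s, by omega⟩ := by
      have := List.getLast?_eq_getLast hcne
      rw [hlast] at this
      have h2 : c.getLast hcne = c.get ⟨c.length - 1, by omega⟩ := List.getLast_eq_getElem hcne
      have : x = c.getLast hcne := by injection this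
      rw [this, h2]
    simp only [mkP_last, Fin.val_last]
    rw [show (c.get ⟨s, by omega⟩).2.2 = x.2.2 from by rw [← hxl]]
    exact hsur
  · -- chain
    intro j
    have hj : (j : ℕ) < c.length - 1 := by have := j.isLt; omega
    have hlnk := List.isChain_iff_getElem.mp hc.2.1 j (by omega)
    constructor
    · exact hlnk.1
    · rcases hlnk.2 with h | h
      · exact Or.inl h
      · exact Or.inr h


open Classical in
lemma exists_surplus {E M M0 : Finset (A × H)} {bH : H → ℕ} {part : A → Fin p}
    {kk : Fin p → ℕ} {i : Fin p}
    (hM : IsMaxBM E (fun _ => 1) bH M) (hM0 : IsMaxBM E (fun _ => 1) bH M0)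
    (hM0k : ∀ t, kk t ≤ nMatched part M0 t)
    (hdef : nMatched part M i < kk i) :
    ∃ a, Rch E M part i a ∧ kk (part a) < nMatched part M (part a) := by
  classical
  by_contra hcon
  push_neg at hcon
  set Tp : Finset (Fin p) :=
    univ.filter (fun t => t = i ∨ ∃ a, Rch E M part i a ∧ part a = t) with hTp
  set W : Finset H := univ.filter (fun h => WH E M part i h) with hW
  set R : Finset A := univ.filter (fun a => Rch E M part i a) with hR
  have hiTp : i ∈ Tp := by simp [hTp]
  have hfib : ∀ (N : Finset (A × H)),
      (univ.filter (fun a : A => part a ∈ Tp ∧ Matched N a)).card =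
        ∑ t ∈ Tp, nMatched part N t := by
    intro N
    rw [Finset.card_eq_sum_card_fiberwise (f := part) (t := Tp)
        (s := univ.filter (fun a : A => part a ∈ Tp ∧ Matched N a))
      (fun a ha => (Finset.mem_filter.mp ha).2.1)]
    apply Finset.sum_congr rfl
    intro t ht
    apply congrArg Finset.card
    ext a
    simp only [nMatched, Matched, Finset.mem_filter, Finset.mem_univ, true_and]
    constructor
    · rintro ⟨h1, hpt⟩
      exact ⟨hpt, ((@Finset.mem_filter A (fun a => part a ∈ Tp ∧ Matched N a)
        (fun _ => @instDecidableAnd _ _ inferInstance (Classical.propDecidable _)) univ a).mp h1).2.2⟩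
    · rintro ⟨hpt, hm⟩
      exact ⟨(@Finset.mem_filter A (fun a => part a ∈ Tp ∧ Matched N a)
        (fun _ => @instDecidableAnd _ _ inferInstance (Classical.propDecidable _)) univ a).mpr ⟨Finset.mem_univ _, hpt ▸ ht, hm⟩, hpt⟩
  have hA : (univ.filter (fun a : A => part a ∈ Tp ∧ Matched M a)).card <
      (univ.filter (fun a : A => part a ∈ Tp ∧ Matched M0 a)).card := by
    rw [hfib M, hfib M0]
    calc ∑ t ∈ Tp, nMatched part M t < ∑ t ∈ Tp, kk t := by
          apply Finset.sum_lt_sum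
          · intro t ht
            simp only [hTp, Finset.mem_filter, Finset.mem_univ, true_and] at ht
            rcases ht with rfl | ⟨a, hr, rfl⟩
            · exact hdef.le
            · exact hcon a hr
          · exact ⟨i, hiTp, hdef⟩
      _ ≤ ∑ t ∈ Tp, nMatched part M0 t := Finset.sum_le_sum (fun t _ => hM0k t)
  have hWsat : ∀ h ∈ W, hdeg M h = bH h := fun h hh =>
    wh_saturated hM (by simpa [hW] using hh)
  have hfib2 : ∀ (N : Finset (A × H)),
      (N.filter (fun e => e.2 ∈ W)).card = ∑ h ∈ W, hdeg N h := by
    intro N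
    rw [Finset.card_eq_sum_card_fiberwise (f := Prod.snd) (t := W)
        (s := N.filter (fun e => e.2 ∈ W))
      (fun e he => (Finset.mem_filter.mp he).2)]
    apply Finset.sum_congr rfl
    intro h hh
    apply congrArg Finset.card
    ext e
    simp only [hdeg, Finset.mem_filter]
    constructor
    · rintro ⟨⟨he, _⟩, h2⟩
      exact ⟨he, h2⟩
    · rintro ⟨he, h2⟩
      exact ⟨⟨he, h2 ▸ hh⟩, h2⟩
  have hMWR : (M.filter (fun e => e.2 ∈ W)).card ≤ R.card := by
    have hinj : Set.InjOn Prod.fst ((M.filter (fun e => e.2 ∈ W) : Finset (A × H)) : Set (A × H)) := by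
      intro e he e' he' hfst
      simp only [Finset.coe_filter, Set.mem_setOf_eq] at he he'
      have h2 : e.2 = e'.2 := by
        apply unique_house (hM.1.2.1 e.1)
        · exact (Prod.mk.eta (p := e)) ▸ he.1
        · rw [hfst]
          exact (Prod.mk.eta (p := e')) ▸ he'.1
      exact Prod.ext hfst h2
    calc (M.filter (fun e => e.2 ∈ W)).card
        = ((M.filter (fun e => e.2 ∈ W)).image Prod.fst).card :=
          (Finset.card_image_of_injOn hinj).symm
      _ ≤ R.card := by
          apply Finset.card_le_card
          intro a ha
          obtain ⟨e, he, rfl⟩ := Finset.mem_image.mp ha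
          rw [Finset.mem_filter] at he
          rw [hR, Finset.mem_filter]
          refine ⟨Finset.mem_univ _, ?_⟩
          apply wh_rch (h := e.2)
          · exact (Prod.mk.eta (p := e)) ▸ he.1
          · have := he.2
            rw [hW, Finset.mem_filter] at this
            exact this.2
  have hsub : (univ.filter (fun a : A => (part a ∈ Tp ∧ Matched M0 a) ∧ Rch E M part i a)) ∪
      (univ.filter (fun a : A => (part a ∈ Tp ∧ Matched M0 a) ∧ ¬ Matched M a)) ⊆
      (M0.filter (fun e => e.2 ∈ W)).image Prod.fst := by
    intro a ha
    rw [Finset.mem_union] at ha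
    have haM0 : Matched M0 a := by
      rcases ha with h | h
      · exact (Finset.mem_filter.mp h).2.1.2
      · exact (Finset.mem_filter.mp h).2.1.2
    obtain ⟨h₀, hm0⟩ := haM0
    have hE0 : (a, h₀) ∈ E := hM0.1.1 hm0
    have hh₀W : h₀ ∈ W := by
      rcases ha with hra | hun
      · have hr : Rch E M part i a := (Finset.mem_filter.mp hra).2.2
        by_cases hmem : (a, h₀) ∈ M
        · obtain ⟨h₁, hm1, hw1⟩ := rch_house hr
          have heq : h₀ = h₁ := unique_house (hM.1.2.1 a) hmem hm1
          rw [hW, Finset.mem_filter]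
          exact ⟨Finset.mem_univ _, heq ▸ hw1⟩
        · rw [hW, Finset.mem_filter]
          exact ⟨Finset.mem_univ _, a, Or.inl hr, hE0, hmem⟩
      · have h1 := Finset.mem_filter.mp hun
        have hunm : ¬ Matched M a := h1.2.2
        have hTpa : part a ∈ Tp := h1.2.1.1
        simp only [hTp, Finset.mem_filter, Finset.mem_univ, true_and] at hTpa
        rw [hW, Finset.mem_filter]
        exact ⟨Finset.mem_univ _, a, Or.inr ⟨hunm, hTpa⟩, hE0,
          not_mem_of_not_matched hunm _⟩
    exact Finset.mem_image.mpr ⟨(a, h₀), Finset.mem_filter.mpr ⟨hm0, hh₀W⟩, rfl⟩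
  have hdisj : Disjoint
      (univ.filter (fun a : A => (part a ∈ Tp ∧ Matched M0 a) ∧ Rch E M part i a))
      (univ.filter (fun a : A => (part a ∈ Tp ∧ Matched M0 a) ∧ ¬ Matched M a)) := by
    rw [Finset.disjoint_left]
    intro a h1 h2
    exact (Finset.mem_filter.mp h2).2.2 (rch_matched (Finset.mem_filter.mp h1).2.2)
  have hB1 : (univ.filter (fun a : A => (part a ∈ Tp ∧ Matched M0 a) ∧ Rch E M part i a)).card +
      (univ.filter (fun a : A => (part a ∈ Tp ∧ Matched M0 a) ∧ ¬ Matched M a)).card ≤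
      R.card := by
    rw [← Finset.card_union_of_disjoint hdisj]
    calc _ ≤ ((M0.filter (fun e => e.2 ∈ W)).image Prod.fst).card :=
          Finset.card_le_card hsub
      _ ≤ (M0.filter (fun e => e.2 ∈ W)).card := Finset.card_image_le
      _ = ∑ h ∈ W, hdeg M0 h := hfib2 M0
      _ ≤ ∑ h ∈ W, bH h := Finset.sum_le_sum (fun h _ => hM0.1.2.2 h)
      _ = ∑ h ∈ W, hdeg M h := Finset.sum_congr rfl (fun h hh => (hWsat h hh).symm)
      _ = (M.filter (fun e => e.2 ∈ W)).card := (hfib2 M).symm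
      _ ≤ R.card := hMWR
  have hB2 : (univ.filter (fun a : A =>
        (part a ∈ Tp ∧ Matched M0 a) ∧ (Matched M a ∧ ¬ Rch E M part i a))).card ≤
      (univ.filter (fun a : A => (part a ∈ Tp ∧ Matched M a) ∧ ¬ Rch E M part i a)).card := by
    apply Finset.card_le_card
    intro a ha
    rw [Finset.mem_filter] at ha ⊢
    exact ⟨ha.1, ⟨ha.2.1.1, ha.2.2.1⟩, ha.2.2.2⟩
  have hsplit0 : (univ.filter (fun a : A => part a ∈ Tp ∧ Matched M0 a)).card =
      (univ.filter (fun a : A => (part a ∈ Tp ∧ Matched M0 a) ∧ Rch E M part i a)).card +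
      ((univ.filter (fun a : A =>
        (part a ∈ Tp ∧ Matched M0 a) ∧ (Matched M a ∧ ¬ Rch E M part i a))).card +
      (univ.filter (fun a : A => (part a ∈ Tp ∧ Matched M0 a) ∧ ¬ Matched M a)).card) := by
    rw [← Finset.card_filter_add_card_filter_not
      (s := univ.filter (fun a : A => part a ∈ Tp ∧ Matched M0 a))
      (p := fun a => Matched M a), Finset.filter_filter, Finset.filter_filter,
      ← add_assoc]
    congr 1
    · rw [← Finset.card_filter_add_card_filter_not
        (s := univ.filter (fun a : A => (part a ∈ Tp ∧ Matched M0 a) ∧ Matched M a))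
        (p := fun a => Rch E M part i a), Finset.filter_filter, Finset.filter_filter]
      congr 1
      · apply congrArg Finset.card
        apply Finset.filter_congr
        intro a _
        constructor
        · rintro ⟨⟨h1, _⟩, h2⟩
          exact ⟨h1, h2⟩
        · rintro ⟨h1, h2⟩
          exact ⟨⟨h1, rch_matched h2⟩, h2⟩
      · apply congrArg Finset.card
        apply Finset.filter_congr
        intro a _
        tauto
  have hsplitA : (univ.filter (fun a : A => part a ∈ Tp ∧ Matched M a)).card =
      R.card +
      (univ.filter (fun a : A => (part a ∈ Tp ∧ Matched M a) ∧ ¬ Rch E M part i a)).card := by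
    rw [← Finset.card_filter_add_card_filter_not
      (s := univ.filter (fun a : A => part a ∈ Tp ∧ Matched M a))
      (p := fun a => Rch E M part i a), Finset.filter_filter, Finset.filter_filter]
    congr 2
    apply Finset.ext
    intro a
    rw [hR]
    simp only [Finset.mem_filter, Finset.mem_univ, true_and]
    constructor
    · rintro ⟨_, h2⟩
      exact h2
    · intro hra
      refine ⟨⟨?_, rch_matched hra⟩, hra⟩
      simp only [hTp, Finset.mem_filter, Finset.mem_univ, true_and]
      exact Or.inr ⟨a, hra, rfl⟩
  omega

end ImpAux

/-- If a partition matching exists and `M` is a maximum b-matching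
matching fewer than `kk i` vertices of the part `A_i`, then there is an improving
sequence for index `i` with respect to `M`. -/
theorem improving_sequence_exists
    {A H : Type*} [Fintype A] [Fintype H] [DecidableEq A] [DecidableEq H]
    (E : Finset (A × H)) (bH : H → ℕ) {p : ℕ} (part : A → Fin p) (kk : Fin p → ℕ)
    (hex : ∃ M0 : Finset (A × H), IsPartitionMatching E bH part kk M0)
    (M : Finset (A × H)) (hM : IsMaxBM E (fun _ => 1) bH M)
    (i : Fin p) (hdef : nMatched part M i < kk i) :
    Nonempty (ImpSeq E M part kk i) := by
  classical
  obtain ⟨M0, hM0⟩ := hex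
  obtain ⟨a, hr, hsur⟩ := ImpAux.exists_surplus hM hM0.1 hM0.2 hdef
  obtain ⟨c, z, hc, hlast, hz⟩ := hr
  obtain ⟨c', x', hc', hpw', hlast', hval⟩ := ImpAux.dedup c.length c rfl hc z hlast
  exact ImpAux.build_impseq hM.1.2.1 c' hc' hpw' x' hlast' (by rw [hval, hz]; exact hsur)
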